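/- Let 1 < p < ∞ and let C be a countable subset of B(ℓᵖ). Then there exist 0 = m₁ < m₂ < ... such that, with P₀ = 0 and P_r the canonical projection from ℓᵖ onto ℓᵖ({m_r+1,...,m_{r+1}}), the series ∑_{r≥1}(P_{r−1}+P_r+P_{r+1})XP_r converges in the strong operator topology and X − ∑_{r≥1}(P_{r−1}+P_r+P_{r+1})XP_r is compact, for every X ∈ C. -/

import Mathlib

open scoped ENNReal
open Filter Topology

noncomputable section
namespace Stmt16Aux

abbrev E (p : ℝ≥0∞) := lp (fun _ : ℕ => ℂ) p

variable {p : ℝ≥0∞} [Fact (1 ≤ p)]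

lemma pt_pos (hp' : p ≠ ⊤) : 0 < p.toReal :=
  ENNReal.toReal_pos (lt_of_lt_of_le zero_lt_one Fact.out).ne' hp'

lemma p_ne_zero : p ≠ 0 := (lt_of_lt_of_le zero_lt_one Fact.out).ne'

lemma memℓp_ite (S : ℕ → Prop) [DecidablePred S] (hp' : p ≠ ⊤) (x : E p) :
    Memℓp (fun i => if S i then x i else 0) p := by
  apply memℓp_gen
  refine Summable.of_nonneg_of_le (fun i => Real.rpow_nonneg (norm_nonneg _) _)
    (fun i => ?_) (((lp.memℓp x).summable (pt_pos hp')))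
  refine Real.rpow_le_rpow (norm_nonneg _) ?_ (pt_pos hp').le
  split_ifs
  · exact le_rfl
  · simp

/-- coordinate projection onto the set `S`. -/
def projL (hp' : p ≠ ⊤) (S : ℕ → Prop) [DecidablePred S] : E p →L[ℂ] E p :=
  LinearMap.mkContinuous
    { toFun := fun x => ⟨fun i => if S i then x i else 0, memℓp_ite S hp' x⟩
      map_add' := by
        intro x y
        apply lp.ext
        funext i
        simp only [lp.coeFn_add, Pi.add_apply]
        split_ifs <;> simp
      map_smul' := by
        intro c x
        apply lp.ext
        funext i
        simp only [lp.coeFn_smul, Pi.smul_apply, RingHom.id_apply]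
        split_ifs <;> simp }
    1 (by
      intro x
      rw [one_mul]
      refine lp.norm_le_of_forall_sum_le (pt_pos hp') (norm_nonneg _) (fun s => ?_)
      refine le_trans ?_ (lp.sum_rpow_le_norm_rpow (pt_pos hp') x s)
      refine Finset.sum_le_sum (fun i _ => ?_)
      refine Real.rpow_le_rpow (norm_nonneg _) ?_ (pt_pos hp').le
      show ‖if S i then x i else 0‖ ≤ ‖x i‖
      split_ifs
      · exact le_rfl
      · simpa using norm_nonneg (x i))

@[simp] lemma projL_apply (hp' : p ≠ ⊤) (S : ℕ → Prop) [DecidablePred S] (x : E p) (i : ℕ) :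
    (projL hp' S x : ∀ _ : ℕ, ℂ) i = if S i then x i else 0 := rfl

lemma norm_projL_apply_le (hp' : p ≠ ⊤) (S : ℕ → Prop) [DecidablePred S] (x : E p) :
    ‖projL hp' S x‖ ≤ ‖x‖ := by
  simpa using (projL hp' S).le_of_opNorm_le (LinearMap.mkContinuous_norm_le _ zero_le_one _) x

lemma norm_projL_le (hp' : p ≠ ⊤) (S : ℕ → Prop) [DecidablePred S] :
    ‖projL (p := p) hp' S‖ ≤ 1 :=
  ContinuousLinearMap.opNorm_le_bound _ zero_le_one
    (fun x => by rw [one_mul]; exact norm_projL_apply_le hp' S x)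

/-- coordinate functional. -/
def coordL (i : ℕ) : E p →L[ℂ] ℂ :=
  LinearMap.mkContinuous
    { toFun := fun x => x i
      map_add' := by intro x y; simp [lp.coeFn_add]
      map_smul' := by intro c x; simp [lp.coeFn_smul] }
    1 (fun x => by rw [one_mul]; exact lp.norm_apply_le_norm p_ne_zero x i)

@[simp] lemma coordL_apply (i : ℕ) (x : E p) : coordL i x = x i := rfl

/-- single coordinate inclusion. -/
def singleL (hp' : p ≠ ⊤) (i : ℕ) : ℂ →L[ℂ] E p :=
  LinearMap.mkContinuous
    { toFun := fun a => lp.single p i a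
      map_add' := by
        intro a b
        apply lp.ext
        funext j
        rcases eq_or_ne j i with rfl | hj
        · simp [lp.single_apply_self, lp.coeFn_add]
        · simp [lp.single_apply_ne p i _ hj, lp.coeFn_add]
      map_smul' := by
        intro c a
        apply lp.ext
        funext j
        rcases eq_or_ne j i with rfl | hj
        · simp [lp.single_apply_self, lp.coeFn_smul]
        · simp [lp.single_apply_ne p i _ hj, lp.coeFn_smul, Pi.single_eq_of_ne hj] }
    1 (fun a => by
      rw [one_mul]
      exact le_of_eq (by exact lp.norm_single (E := fun _ : ℕ => ℂ) (pos_iff_ne_zero.2 p_ne_zero) i a))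

@[simp] lemma singleL_apply (hp' : p ≠ ⊤) (i : ℕ) (a : ℂ) :
    (singleL hp' i a : E p) = lp.single p i a := rfl

lemma isCompact_rankOne (hp' : p ≠ ⊤) (i : ℕ) :
    IsCompactOperator ((singleL hp' i).comp (coordL (p := p) i)) := by
  refine ⟨singleL hp' i '' Metric.closedBall 0 1, ?_, ?_⟩
  · exact ((isCompact_closedBall (0 : ℂ) 1).image (singleL hp' i).continuous)
  · filter_upwards [Metric.closedBall_mem_nhds (0 : E p) zero_lt_one] with x hx
    refine ⟨x i, ?_, rfl⟩
    simp only [Metric.mem_closedBall, dist_zero_right] at hx ⊢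
    exact (lp.norm_apply_le_norm p_ne_zero x i).trans hx

lemma projL_eq_sum_finset (hp' : p ≠ ⊤) (s : Finset ℕ) :
    projL (p := p) hp' (· ∈ s) = ∑ i ∈ s, (singleL hp' i).comp (coordL i) := by
  ext x j
  have : ((∑ i ∈ s, (singleL hp' i).comp (coordL (p := p) i)) x : ∀ _ : ℕ, ℂ) j
      = ∑ i ∈ s, (lp.single p i (x i) : ∀ _ : ℕ, ℂ) j := by
    rw [ContinuousLinearMap.sum_apply, lp.coeFn_sum, Finset.sum_apply]
    rfl
  rw [this]
  simp only [lp.single_apply, projL_apply]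
  by_cases hj : j ∈ s
  · rw [if_pos hj, Finset.sum_eq_single_of_mem j hj (fun i _ hij => dif_neg hij.symm)]
    simp
  · rw [if_neg hj, Finset.sum_eq_zero]
    intro i hi
    refine dif_neg (fun h => hj ?_)
    subst h; exact hi

lemma isCompact_projL_finset (hp' : p ≠ ⊤) (s : Finset ℕ) :
    IsCompactOperator (projL (p := p) hp' (· ∈ s)) := by
  rw [projL_eq_sum_finset hp' s]
  classical
  induction s using Finset.induction with
  | empty => simpa using isCompactOperator_zero
  | @insert _ _ hns ih =>
      rw [Finset.sum_insert hns]
      exact (isCompact_rankOne hp' _).add ih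

/-- projection onto first `n` coordinates -/
def R (hp' : p ≠ ⊤) (n : ℕ) : E p →L[ℂ] E p := projL hp' (fun i => i < n)

/-- projection onto coordinates `≥ n` -/
def Tail (hp' : p ≠ ⊤) (n : ℕ) : E p →L[ℂ] E p := projL hp' (fun i => n ≤ i)

@[simp] lemma R_apply (hp' : p ≠ ⊤) (n : ℕ) (x : E p) (i : ℕ) :
    (R hp' n x : ∀ _ : ℕ, ℂ) i = if i < n then x i else 0 := rfl

@[simp] lemma Tail_apply (hp' : p ≠ ⊤) (n : ℕ) (x : E p) (i : ℕ) :
    (Tail hp' n x : ∀ _ : ℕ, ℂ) i = if n ≤ i then x i else 0 := rfl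

lemma Tail_eq_sub (hp' : p ≠ ⊤) (n : ℕ) (x : E p) : Tail hp' n x = x - R hp' n x := by
  apply lp.ext
  funext i
  rw [lp.coeFn_sub]
  simp only [Tail_apply, Pi.sub_apply, R_apply]
  by_cases h : i < n
  · rw [if_pos h, if_neg (by omega), sub_self]
  · rw [if_neg h, if_pos (by omega), sub_zero]

lemma R_eq_sum (hp' : p ≠ ⊤) (n : ℕ) (x : E p) :
    R hp' n x = ∑ i ∈ Finset.range n, lp.single p i (x i) := by
  apply lp.ext
  funext j
  rw [lp.coeFn_sum, Finset.sum_apply]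
  simp only [R_apply, lp.single_apply]
  by_cases hj : j < n
  · rw [if_pos hj,
      Finset.sum_eq_single_of_mem j (Finset.mem_range.2 hj) (fun i _ hij => dif_neg hij.symm)]
    simp
  · rw [if_neg hj, Finset.sum_eq_zero]
    intro i hi
    refine dif_neg (fun h => hj ?_)
    subst h; exact Finset.mem_range.1 hi

lemma tendsto_R (hp' : p ≠ ⊤) (x : E p) :
    Tendsto (fun n => R hp' n x) atTop (𝓝 x) := by
  have := (lp.hasSum_single hp' x).tendsto_sum_nat
  refine this.congr (fun n => ?_)
  rw [R_eq_sum]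

lemma tendsto_Tail (hp' : p ≠ ⊤) (x : E p) :
    Tendsto (fun n => ‖Tail hp' n x‖) atTop (𝓝 0) := by
  have h1 : Tendsto (fun n => x - R hp' n x) atTop (𝓝 (x - x)) :=
    tendsto_const_nhds.sub (tendsto_R hp' x)
  rw [sub_self] at h1
  have := h1.norm
  rw [norm_zero] at this
  refine this.congr (fun n => ?_)
  rw [← Tail_eq_sub]

lemma right_small (hp' : p ≠ ⊤) (Y : E p →L[ℂ] E p) (n : ℕ) :
    Tendsto (fun k => ‖(Tail hp' k).comp (Y.comp (R hp' n))‖) atTop (𝓝 0) := by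
  have hS : Tendsto (fun k => ∑ i ∈ Finset.range n,
      ‖Tail hp' k (Y (lp.single p i (1 : ℂ)))‖) atTop (𝓝 0) := by
    have := tendsto_finset_sum (Finset.range n)
      (fun i _ => tendsto_Tail hp' (Y (lp.single p i (1 : ℂ))))
    simpa using this
  refine tendsto_of_tendsto_of_tendsto_of_le_of_le tendsto_const_nhds hS
    (fun k => norm_nonneg _) (fun k => ?_)
  refine ContinuousLinearMap.opNorm_le_bound _
    (Finset.sum_nonneg (fun i _ => norm_nonneg _)) (fun x => ?_)
  have hx : (Tail hp' k).comp (Y.comp (R hp' n)) x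
      = ∑ i ∈ Finset.range n, x i • Tail hp' k (Y (lp.single p i (1 : ℂ))) := by
    rw [ContinuousLinearMap.comp_apply, ContinuousLinearMap.comp_apply, R_eq_sum, map_sum,
      map_sum]
    refine Finset.sum_congr rfl (fun i _ => ?_)
    have : (lp.single p i (x i) : E p) = x i • (lp.single p i (1 : ℂ) : E p) := by
      apply lp.ext
      funext j
      rw [lp.coeFn_smul]
      simp only [Pi.smul_apply, lp.single_apply]
      rcases eq_or_ne j i with rfl | hj
      · simp
      · simp [dif_neg hj, Pi.single_eq_of_ne hj]
    rw [this, map_smul, map_smul]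
  rw [hx, Finset.sum_mul]
  refine (norm_sum_le _ _).trans (Finset.sum_le_sum (fun i _ => ?_))
  rw [norm_smul]
  rw [mul_comm (‖Tail hp' k (Y (lp.single p i (1 : ℂ)))‖)]
  exact mul_le_mul_of_nonneg_right (lp.norm_apply_le_norm p_ne_zero x i)
    (norm_nonneg (Tail hp' k (Y (lp.single p i (1 : ℂ)))))

lemma exists_block (m : ℕ → ℕ) (hm : StrictMono m) (h0 : m 0 = 0) (i : ℕ) :
    ∃ k, m k ≤ i ∧ i < m (k + 1) := by
  have hex : ∃ k, i < m k := ⟨i + 1, lt_of_lt_of_le (Nat.lt_succ_self i) (hm.le_apply)⟩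
  have hne : Nat.find hex ≠ 0 := by
    intro h
    have := Nat.find_spec hex
    rw [h, h0] at this
    omega
  obtain ⟨k, hk⟩ := Nat.exists_eq_succ_of_ne_zero hne
  refine ⟨k, ?_, ?_⟩
  · have := Nat.find_min hex (m := k) (by omega)
    omega
  · have := Nat.find_spec hex
    rw [hk] at this
    exact this

lemma one_lt_pt (hp1 : 1 < p) (hp' : p ≠ ⊤) : 1 < p.toReal := by
  rw [← ENNReal.toReal_one]
  exact (ENNReal.toReal_lt_toReal ENNReal.one_ne_top hp').2 hp1

lemma shrink (hp1 : 1 < p) (hp' : p ≠ ⊤) (ψ : E p →L[ℂ] ℂ) :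
    Tendsto (fun k => ‖ψ.comp (Tail hp' k)‖) atTop (𝓝 0) := by
  classical
  set pt := p.toReal with hptdef
  have hpt : 0 < pt := pt_pos hp'
  have hpt1 : 1 < pt := one_lt_pt hp1 hp'
  set c : ℕ → ℝ := fun k => ‖ψ.comp (Tail hp' k)‖ with hc
  have hanti : Antitone c := by
    intro a b hab
    have hcomp : ψ.comp (Tail hp' b) = (ψ.comp (Tail hp' a)).comp (Tail hp' b) := by
      ext x
      simp only [ContinuousLinearMap.comp_apply]
      congr 1
      apply lp.ext
      funext i
      simp only [Tail_apply]
      by_cases h : b ≤ i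
      · have h2 : a ≤ i := le_trans hab h
        simp [h, h2]
      · simp [h]
    calc c b = ‖(ψ.comp (Tail hp' a)).comp (Tail hp' b)‖ := by rw [hc]; simp only; rw [hcomp]
      _ ≤ ‖ψ.comp (Tail hp' a)‖ * ‖Tail hp' b‖ := ContinuousLinearMap.opNorm_comp_le _ _
      _ ≤ c a * 1 := by
          refine mul_le_mul_of_nonneg_left ?_ (norm_nonneg _)
          exact norm_projL_le hp' _
      _ = c a := mul_one _
  have hbdd : BddBelow (Set.range c) := ⟨0, by rintro y ⟨k, rfl⟩; exact norm_nonneg _⟩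
  have hlim : Tendsto c atTop (𝓝 (⨅ k, c k)) := tendsto_atTop_ciInf hanti hbdd
  set L := ⨅ k, c k with hLdef
  have hL0 : 0 ≤ L := le_ciInf (fun k => norm_nonneg _)
  rcases eq_or_lt_of_le hL0 with h0 | hLpos
  · rwa [← h0] at hlim
  exfalso
  have hLle : ∀ k, L ≤ c k := fun k => ciInf_le hbdd k
  -- construct disjointly supported unit vectors on which ψ is large
  have step : ∀ n : ℕ, ∃ n' : ℕ, n < n' ∧ ∃ v : E p,
      (∀ i, (v : ∀ _ : ℕ, ℂ) i ≠ 0 → (n ≤ i ∧ i < n')) ∧ ‖v‖ ≤ 1 ∧ L / 4 ≤ ‖ψ v‖ := by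
    intro n
    have h1 : L / 2 < ‖ψ.comp (Tail hp' n)‖ := lt_of_lt_of_le (by linarith) (hLle n)
    obtain ⟨x, hx1, hx2⟩ := (ψ.comp (Tail hp' n)).exists_lt_apply_of_lt_opNorm h1
    set u := Tail hp' n x with hu
    have hψu : L / 2 < ‖ψ u‖ := hx2
    have hten : Tendsto (fun k => ‖ψ (R hp' k u)‖) atTop (𝓝 ‖ψ u‖) :=
      ((ψ.continuous.tendsto u).comp (tendsto_R hp' u)).norm
    have hev : ∀ᶠ k in atTop, L / 4 < ‖ψ (R hp' k u)‖ :=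
      hten.eventually (eventually_gt_nhds (by linarith))
    obtain ⟨k, hk1, hk2⟩ := (hev.and (eventually_gt_atTop n)).exists
    refine ⟨k, hk2, R hp' k u, ?_, ?_, le_of_lt hk1⟩
    · intro i hi
      simp only [R_apply, hu, Tail_apply] at hi
      by_cases h2 : i < k
      · rw [if_pos h2] at hi
        by_cases h3 : n ≤ i
        · exact ⟨h3, h2⟩
        · rw [if_neg h3] at hi; exact absurd rfl hi
      · rw [if_neg h2] at hi; exact absurd rfl hi
    · exact (norm_projL_apply_le hp' _ u).trans
        ((norm_projL_apply_le hp' _ x).trans hx1.le)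
  choose f hlt v hsupp hnorm hψv using step
  set N : ℕ → ℕ := fun j => f^[j] 0 with hN
  have hNsucc : ∀ j, N (j + 1) = f (N j) := fun j => Function.iterate_succ_apply' f j 0
  have hNmono : StrictMono N := strictMono_nat_of_lt_succ (fun j => by rw [hNsucc]; exact hlt _)
  set w : ℕ → E p := fun j => v (N j) with hw
  have hwsupp : ∀ j i, (w j : ∀ _ : ℕ, ℂ) i ≠ 0 → N j ≤ i ∧ i < N (j + 1) := by
    intro j i hi
    have := hsupp (N j) i hi
    rw [hNsucc]
    exact this
  have hψw : ∀ j, L / 4 ≤ ‖ψ (w j)‖ := fun j => hψv (N j)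
  have hψwne : ∀ j, ψ (w j) ≠ 0 := by
    intro j h
    have := hψw j
    rw [h, norm_zero] at this
    linarith
  -- the key estimate for every J
  have key : ∀ J : ℕ, (J : ℝ) * (L / 4) ≤ ‖ψ‖ * (J : ℝ) ^ (1 / pt) := by
    intro J
    set θ : ℕ → ℂ := fun j => (‖ψ (w j)‖ : ℂ) / ψ (w j) with hθ
    have hθnorm : ∀ j, ‖θ j‖ = 1 := by
      intro j
      rw [hθ]
      simp only [norm_div, Complex.norm_real, Real.norm_eq_abs, abs_norm]
      exact div_self (fun h => hψwne j (norm_eq_zero.1 h))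
    set y : E p := ∑ j ∈ Finset.range J, θ j • w j with hy
    have hψy : ψ y = ((∑ j ∈ Finset.range J, ‖ψ (w j)‖ : ℝ) : ℂ) := by
      rw [hy, map_sum]
      push_cast
      refine Finset.sum_congr rfl (fun j _ => ?_)
      rw [map_smul, smul_eq_mul, hθ]
      exact div_mul_cancel₀ _ (hψwne j)
    have hψy_norm : (J : ℝ) * (L / 4) ≤ ‖ψ y‖ := by
      rw [hψy, Complex.norm_real, Real.norm_eq_abs,
        abs_of_nonneg (Finset.sum_nonneg (fun j _ => norm_nonneg _))]
      calc (J : ℝ) * (L / 4) = ∑ _j ∈ Finset.range J, L / 4 := by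
            rw [Finset.sum_const, Finset.card_range, nsmul_eq_mul]
        _ ≤ ∑ j ∈ Finset.range J, ‖ψ (w j)‖ := Finset.sum_le_sum (fun j _ => hψw j)
    have hykey : ∀ i : ℕ, ‖(y : ∀ _ : ℕ, ℂ) i‖ ^ pt
        ≤ ∑ j ∈ Finset.range J, ‖(w j : ∀ _ : ℕ, ℂ) i‖ ^ pt := by
      intro i
      have hyi : (y : ∀ _ : ℕ, ℂ) i = ∑ j ∈ Finset.range J, θ j * (w j : ∀ _ : ℕ, ℂ) i := by
        rw [hy, lp.coeFn_sum, Finset.sum_apply]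
        refine Finset.sum_congr rfl (fun j _ => ?_)
        rw [lp.coeFn_smul, Pi.smul_apply, smul_eq_mul]
      by_cases hex : ∃ j ∈ Finset.range J, (w j : ∀ _ : ℕ, ℂ) i ≠ 0
      · obtain ⟨j0, hj0J, hj0⟩ := hex
        have hblock := hwsupp j0 i hj0
        have hyi2 : (y : ∀ _ : ℕ, ℂ) i = θ j0 * (w j0 : ∀ _ : ℕ, ℂ) i := by
          rw [hyi]
          refine Finset.sum_eq_single_of_mem j0 hj0J (fun j _ hjne => ?_)
          rcases lt_or_gt_of_ne hjne with h | h
          · have : N (j + 1) ≤ N j0 := hNmono.monotone h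
            have hz : (w j : ∀ _ : ℕ, ℂ) i = 0 := by
              by_contra hcon
              have := hwsupp j i hcon
              omega
            rw [hz, mul_zero]
          · have : N (j0 + 1) ≤ N j := hNmono.monotone h
            have hz : (w j : ∀ _ : ℕ, ℂ) i = 0 := by
              by_contra hcon
              have := hwsupp j i hcon
              omega
            rw [hz, mul_zero]
        rw [hyi2, norm_mul, hθnorm j0, one_mul]
        exact Finset.single_le_sum (f := fun j => ‖(w j : ∀ _ : ℕ, ℂ) i‖ ^ pt)
          (fun j _ => Real.rpow_nonneg (norm_nonneg _) _) hj0J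
      · push_neg at hex
        have : (y : ∀ _ : ℕ, ℂ) i = 0 := by
          rw [hyi]
          exact Finset.sum_eq_zero (fun j hj => by rw [hex j hj, mul_zero])
        rw [this, norm_zero, Real.zero_rpow hpt.ne']
        exact Finset.sum_nonneg (fun j _ => Real.rpow_nonneg (norm_nonneg _) _)
    have hynorm : ‖y‖ ^ pt ≤ (J : ℝ) := by
      rw [lp.norm_rpow_eq_tsum hpt]
      have hsum1 : Summable (fun i => ‖(y : ∀ _ : ℕ, ℂ) i‖ ^ pt) := (lp.memℓp y).summable hpt
      have hsum2 : ∀ j, Summable (fun i => ‖(w j : ∀ _ : ℕ, ℂ) i‖ ^ pt) :=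
        fun j => (lp.memℓp (w j)).summable hpt
      calc ∑' i, ‖(y : ∀ _ : ℕ, ℂ) i‖ ^ pt
          ≤ ∑' i, ∑ j ∈ Finset.range J, ‖(w j : ∀ _ : ℕ, ℂ) i‖ ^ pt :=
            Summable.tsum_le_tsum hykey hsum1 (summable_sum (fun j _ => hsum2 j))
        _ = ∑ j ∈ Finset.range J, ∑' i, ‖(w j : ∀ _ : ℕ, ℂ) i‖ ^ pt :=
            Summable.tsum_finsetSum (fun j _ => hsum2 j)
        _ ≤ ∑ _j ∈ Finset.range J, 1 := by
            refine Finset.sum_le_sum (fun j _ => ?_)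
            rw [← lp.norm_rpow_eq_tsum hpt]
            exact Real.rpow_le_one (norm_nonneg _) (hnorm (N j)) hpt.le
        _ = (J : ℝ) := by rw [Finset.sum_const, Finset.card_range, nsmul_eq_mul, mul_one]
    have hynorm' : ‖y‖ ≤ (J : ℝ) ^ (1 / pt) := by
      have h := Real.rpow_le_rpow (Real.rpow_nonneg (norm_nonneg y) pt) hynorm
        (le_of_lt (by positivity : (0:ℝ) < 1 / pt))
      rwa [← Real.rpow_mul (norm_nonneg y), mul_one_div, div_self hpt.ne',
        Real.rpow_one] at h
    calc (J : ℝ) * (L / 4) ≤ ‖ψ y‖ := hψy_norm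
      _ ≤ ‖ψ‖ * ‖y‖ := ψ.le_opNorm y
      _ ≤ ‖ψ‖ * (J : ℝ) ^ (1 / pt) := mul_le_mul_of_nonneg_left hynorm' (norm_nonneg _)
  -- contradiction
  have hexp : 0 < 1 - 1 / pt := by
    have : 1 / pt < 1 := by
      rw [div_lt_one hpt]; exact hpt1
    linarith
  have htend : Tendsto (fun J : ℕ => (J : ℝ) ^ (1 - 1 / pt)) atTop atTop :=
    (tendsto_rpow_atTop hexp).comp tendsto_natCast_atTop_atTop
  obtain ⟨J, hJ1, hJ2⟩ :=
    ((htend.eventually_gt_atTop (4 * ‖ψ‖ / L)).and (eventually_gt_atTop 0)).exists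
  have hkeyJ := key J
  have hJpos : (0:ℝ) < (J:ℝ) := by exact_mod_cast hJ2
  have hsplit : (J : ℝ) ^ (1 / pt) * (J : ℝ) ^ (1 - 1 / pt) = (J : ℝ) := by
    rw [← Real.rpow_add hJpos]
    norm_num
  have hpow : (0:ℝ) < (J : ℝ) ^ (1 / pt) := Real.rpow_pos_of_pos hJpos _
  have h2 : (J : ℝ) ^ (1 - 1 / pt) * (L / 4) ≤ ‖ψ‖ := by
    refine le_of_mul_le_mul_right ?_ hpow
    calc (J : ℝ) ^ (1 - 1 / pt) * (L / 4) * (J : ℝ) ^ (1 / pt)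
        = ((J : ℝ) ^ (1 / pt) * (J : ℝ) ^ (1 - 1 / pt)) * (L / 4) := by ring
      _ = (J : ℝ) * (L / 4) := by rw [hsplit]
      _ ≤ ‖ψ‖ * (J : ℝ) ^ (1 / pt) := hkeyJ
  have h3 : 4 * ‖ψ‖ / L < (J : ℝ) ^ (1 - 1 / pt) := hJ1
  have h4 : 4 * ‖ψ‖ < (J : ℝ) ^ (1 - 1 / pt) * L := (div_lt_iff₀ hLpos).mp h3
  linarith

lemma left_small (hp1 : 1 < p) (hp' : p ≠ ⊤) (Y : E p →L[ℂ] E p) (n : ℕ) :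
    Tendsto (fun k => ‖(R hp' n).comp (Y.comp (Tail hp' k))‖) atTop (𝓝 0) := by
  have hS : Tendsto (fun k => ∑ i ∈ Finset.range n,
      ‖((coordL (p := p) i).comp Y).comp (Tail hp' k)‖) atTop (𝓝 0) := by
    have := tendsto_finset_sum (Finset.range n)
      (fun i _ => shrink hp1 hp' ((coordL (p := p) i).comp Y))
    simpa using this
  refine tendsto_of_tendsto_of_tendsto_of_le_of_le tendsto_const_nhds hS
    (fun k => norm_nonneg _) (fun k => ?_)
  refine ContinuousLinearMap.opNorm_le_bound _
    (Finset.sum_nonneg (fun i _ => norm_nonneg _)) (fun x => ?_)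
  have hx : (R hp' n).comp (Y.comp (Tail hp' k)) x
      = ∑ i ∈ Finset.range n, lp.single p i (((coordL i).comp Y).comp (Tail hp' k) x) := by
    rw [ContinuousLinearMap.comp_apply, ContinuousLinearMap.comp_apply, R_eq_sum]
    rfl
  rw [hx, Finset.sum_mul]
  refine (norm_sum_le _ _).trans (Finset.sum_le_sum (fun i _ => ?_))
  have hsn : ‖(lp.single p i ((((coordL (p := p) i).comp Y).comp (Tail hp' k)) x) : E p)‖
      = ‖(((coordL (p := p) i).comp Y).comp (Tail hp' k)) x‖ := by
    simpa using lp.norm_single (E := fun _ : ℕ => ℂ) (pos_iff_ne_zero.2 p_ne_zero)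
      i ((((coordL (p := p) i).comp Y).comp (Tail hp' k)) x)
  rw [hsn]
  exact ContinuousLinearMap.le_opNorm _ x

lemma exists_step (hp1 : 1 < p) (hp' : p ≠ ⊤) (X : ℕ → E p →L[ℂ] E p) (r n : ℕ) :
    ∃ n', n < n' ∧ ∀ j ≤ r,
    ‖(Tail hp' n').comp ((X j).comp (R hp' n))‖ ≤ (2⁻¹ : ℝ) ^ r ∧
    ‖(R hp' n).comp ((X j).comp (Tail hp' n'))‖ ≤ (2⁻¹ : ℝ) ^ r := by
  have hev : ∀ᶠ k in atTop, n < k ∧ ∀ j ∈ Finset.range (r + 1),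
      ‖(Tail hp' k).comp ((X j).comp (R hp' n))‖ ≤ (2⁻¹ : ℝ) ^ r ∧
      ‖(R hp' n).comp ((X j).comp (Tail hp' k))‖ ≤ (2⁻¹ : ℝ) ^ r := by
    refine (eventually_gt_atTop n).and ((eventually_all_finset _).2 (fun j _ => ?_))
    have hpow : (0:ℝ) < (2⁻¹ : ℝ) ^ r := by positivity
    exact ((right_small hp' (X j) n).eventually_le_const hpow).and
      ((left_small hp1 hp' (X j) n).eventually_le_const hpow)
  obtain ⟨k, hk1, hk2⟩ := hev.exists
  exact ⟨k, hk1, fun j hj => hk2 j (Finset.mem_range.2 (Nat.lt_succ_of_le hj))⟩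

/-- the sequence of block endpoints -/
noncomputable def mseq (hp1 : 1 < p) (hp' : p ≠ ⊤) (X : ℕ → E p →L[ℂ] E p) : ℕ → ℕ
  | 0 => 0
  | r + 1 => Classical.choose (exists_step hp1 hp' X r (mseq hp1 hp' X r))

section Construction2
variable (hp1 : 1 < p) (hp' : p ≠ ⊤) (X : ℕ → E p →L[ℂ] E p)

lemma mseq_zero : mseq hp1 hp' X 0 = 0 := by rw [mseq]

lemma mseq_lt (r : ℕ) : mseq hp1 hp' X r < mseq hp1 hp' X (r + 1) :=
  (Classical.choose_spec (exists_step hp1 hp' X r (mseq hp1 hp' X r))).1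

lemma mseq_strictMono : StrictMono (mseq hp1 hp' X) :=
  strictMono_nat_of_lt_succ (mseq_lt hp1 hp' X)

lemma mseq_bound (r : ℕ) : ∀ j ≤ r,
    ‖(Tail hp' (mseq hp1 hp' X (r+1))).comp ((X j).comp (R hp' (mseq hp1 hp' X r)))‖
      ≤ (2⁻¹ : ℝ) ^ r ∧
    ‖(R hp' (mseq hp1 hp' X r)).comp ((X j).comp (Tail hp' (mseq hp1 hp' X (r+1))))‖
      ≤ (2⁻¹ : ℝ) ^ r :=
  (Classical.choose_spec (exists_step hp1 hp' X r (mseq hp1 hp' X r))).2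

end Construction2

lemma hasSum_blocks (hp' : p ≠ ⊤) (m : ℕ → ℕ) (hm : StrictMono m) (h0 : m 0 = 0) (x : E p) :
    HasSum (fun k => projL hp' (fun i => m k ≤ i ∧ i < m (k + 1)) x) x := by
  classical
  set t : ℕ → Finset ℕ := fun k => Finset.Ico (m k) (m (k + 1)) with ht
  have hterm : ∀ k, projL hp' (fun i => m k ≤ i ∧ i < m (k + 1)) x
      = ∑ i ∈ t k, lp.single p i (x i) := by
    intro k
    have h1 : projL hp' (fun i => m k ≤ i ∧ i < m (k + 1)) x = projL hp' (· ∈ t k) x := by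
      apply lp.ext
      funext i
      simp only [projL_apply, ht, Finset.mem_Ico]
    rw [h1, projL_eq_sum_finset hp' (t k)]
    rw [ContinuousLinearMap.sum_apply]
    rfl
  have hmono : Monotone (fun s : Finset ℕ => s.biUnion t) :=
    fun s u hsu => Finset.biUnion_subset_biUnion_of_subset_left _ hsu
  have htt : Tendsto (fun s : Finset ℕ => s.biUnion t) atTop atTop := by
    refine tendsto_atTop_finset_of_monotone hmono (fun i => ?_)
    obtain ⟨k, hk1, hk2⟩ := exists_block m hm h0 i
    exact ⟨{k}, Finset.mem_biUnion.2 ⟨k, Finset.mem_singleton_self k,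
      Finset.mem_Ico.2 ⟨hk1, hk2⟩⟩⟩
  have hdisj : ∀ s : Finset ℕ, Set.PairwiseDisjoint (↑s) t := by
    intro s k1 _ k2 _ hne
    refine Finset.disjoint_left.2 (fun i hi1 hi2 => ?_)
    rw [ht] at hi1 hi2
    simp only [Finset.mem_Ico] at hi1 hi2
    rcases lt_or_gt_of_ne hne with h | h
    · have := hm.monotone (show k1 + 1 ≤ k2 from h)
      omega
    · have := hm.monotone (show k2 + 1 ≤ k1 from h)
      omega
  have hmain : Tendsto (fun s : Finset ℕ => ∑ k ∈ s, ∑ i ∈ t k, lp.single p i (x i))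
      atTop (𝓝 x) := by
    have hcomp := (lp.hasSum_single hp' x).comp htt
    refine hcomp.congr (fun s => ?_)
    show ∑ i ∈ s.biUnion t, lp.single p i (x i) = _
    exact Finset.sum_biUnion (hdisj s)
  rw [HasSum]
  refine hmain.congr' ?_
  filter_upwards with s
  exact Finset.sum_congr rfl (fun k _ => (hterm k).symm)

/-- the block projections -/
def Pdef (hp' : p ≠ ⊤) (m : ℕ → ℕ) : ℕ → (E p →L[ℂ] E p)
  | 0 => 0
  | r + 1 => projL hp' (fun i => m r ≤ i ∧ i < m (r + 1))

lemma Pdef_zero (hp' : p ≠ ⊤) (m : ℕ → ℕ) : Pdef hp' m 0 = 0 := by rw [Pdef]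

lemma Pdef_succ (hp' : p ≠ ⊤) (m : ℕ → ℕ) (r : ℕ) :
    Pdef hp' m (r + 1) = projL hp' (fun i => m r ≤ i ∧ i < m (r + 1)) := by rw [Pdef]

lemma Pdef_apply (hp' : p ≠ ⊤) (m : ℕ → ℕ) (r : ℕ) (x : E p) (i : ℕ) :
    (Pdef hp' m (r + 1) x : ∀ _ : ℕ, ℂ) i = if m r ≤ i ∧ i < m (r + 1) then x i else 0 := by
  rw [Pdef_succ, projL_apply]

lemma Pdef_compact (hp' : p ≠ ⊤) (m : ℕ → ℕ) (r : ℕ) :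
    IsCompactOperator (Pdef hp' m (r + 1)) := by
  rw [Pdef_succ]
  have heq : projL hp' (fun i => m r ≤ i ∧ i < m (r + 1))
      = projL hp' (· ∈ Finset.Ico (m r) (m (r + 1))) := by
    ext x i
    simp only [projL_apply, Finset.mem_Ico]
  rw [heq]
  exact isCompact_projL_finset hp' _

lemma Pdef_norm_apply_le (hp' : p ≠ ⊤) (m : ℕ → ℕ) (r : ℕ) (x : E p) :
    ‖Pdef hp' m (r + 1) x‖ ≤ ‖x‖ := by
  rw [Pdef_succ]
  exact norm_projL_apply_le hp' _ x

end Stmt16Aux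

end
open Stmt16Aux Filter

set_option maxHeartbeats 1000000 in
/-- simultaneous quasi-tridiagonalization. For a countable family `X : ℕ → B(ℓᵖ)`
there are blocks `[m r, m (r+1))` (with `m 0 = 0`, `m` strictly monotone) and corresponding
coordinate projections `P` (`P 0 = 0`, `P (r+1)` projecting onto coordinates in
`[m r, m (r+1))`) such that for each member `X j` the tridiagonal series
`∑_{r≥1} (P_{r−1} + P_r + P_{r+1}) (X j) P_r` converges in the strong operator topology to
some `B` with `X j − B` compact. -/
theorem stmt16 (p : ℝ≥0∞) [Fact (1 ≤ p)] (hp : 1 < p) (hp' : p ≠ ⊤)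
    (X : ℕ → (lp (fun _ : ℕ => ℂ) p →L[ℂ] lp (fun _ : ℕ => ℂ) p)) :
    ∃ (m : ℕ → ℕ) (P : ℕ → (lp (fun _ : ℕ => ℂ) p →L[ℂ] lp (fun _ : ℕ => ℂ) p)),
      m 0 = 0 ∧ StrictMono m ∧ P 0 = 0 ∧
      (∀ (r : ℕ) (x : lp (fun _ : ℕ => ℂ) p) (i : ℕ),
        (P (r + 1)) x i = if m r ≤ i ∧ i < m (r + 1) then x i else 0) ∧
      ∀ j : ℕ, ∃ B : lp (fun _ : ℕ => ℂ) p →L[ℂ] lp (fun _ : ℕ => ℂ) p,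
        (∀ x : lp (fun _ : ℕ => ℂ) p,
          HasSum (fun k : ℕ => ((P k + P (k + 1) + P (k + 2)) ∘L X j ∘L P (k + 1)) x) (B x)) ∧
        IsCompactOperator (X j - B) := by
  classical
  set m : ℕ → ℕ := mseq hp hp' X with hm
  have hmono : StrictMono m := mseq_strictMono hp hp' X
  have h0 : m 0 = 0 := mseq_zero hp hp' X
  set P : ℕ → (E p →L[ℂ] E p) := Pdef hp' m with hP
  have hPform : ∀ (r : ℕ) (x : E p) (i : ℕ),
      (P (r + 1) x : ∀ _ : ℕ, ℂ) i = if m r ≤ i ∧ i < m (r + 1) then x i else 0 :=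
    fun r x i => Pdef_apply hp' m r x i
  refine ⟨m, P, h0, hmono, Pdef_zero hp' m, hPform, ?_⟩
  intro j
  set Q : ℕ → (E p →L[ℂ] E p) := fun k => P k + P (k + 1) + P (k + 2) with hQ
  set D : ℕ → (E p →L[ℂ] E p) :=
    fun k => (X j).comp (P (k + 1)) - (Q k).comp ((X j).comp (P (k + 1))) with hD
  -- the norm bound
  have hDnorm : ∀ k, j + 1 ≤ k → ‖D k‖ ≤ 4 * (2⁻¹ : ℝ) ^ k := by
    intro k hk
    obtain ⟨s, rfl⟩ : ∃ s, k = s + 1 := ⟨k - 1, by omega⟩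
    have hjs : j ≤ s := by omega
    refine ContinuousLinearMap.opNorm_le_bound _ (by positivity) (fun x => ?_)
    set w : E p := P (s + 2) x with hw
    set z : E p := X j w with hz
    have hzw : D (s + 1) x = z - Q (s + 1) z := rfl
    have hm1 : m s ≤ m (s + 1) := hmono.monotone (by omega)
    have hm2 : m (s + 1) ≤ m (s + 2) := hmono.monotone (by omega)
    have hm3 : m (s + 2) ≤ m (s + 3) := hmono.monotone (by omega)
    have hsplit : z - Q (s + 1) z = R hp' (m s) z + Tail hp' (m (s + 3)) z := by
      apply lp.ext
      funext i
      rw [lp.coeFn_sub, lp.coeFn_add]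
      simp only [Pi.sub_apply, Pi.add_apply, Stmt16Aux.R_apply, Stmt16Aux.Tail_apply, hQ,
        ContinuousLinearMap.add_apply]
      have e1 := hPform s z i
      have e2 := hPform (s + 1) z i
      have e3 := hPform (s + 2) z i
      rw [lp.coeFn_add, lp.coeFn_add]
      simp only [Pi.add_apply]
      have ha : m (s + 1 + 1) = m (s + 2) := rfl
      have hb : m (s + 2 + 1) = m (s + 3) := rfl
      rw [e1, e2, e3]
      split_ifs <;> (try (exfalso; omega)) <;> ring
    have hwc : ∀ i, (w : ∀ _ : ℕ, ℂ) i = if m (s + 1) ≤ i ∧ i < m (s + 2) then x i else 0 :=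
      fun i => hPform (s + 1) x i
    have hwnorm : ‖w‖ ≤ ‖x‖ := Pdef_norm_apply_le hp' m (s + 1) x
    have hterm1 : ‖R hp' (m s) z‖ ≤ (2⁻¹ : ℝ) ^ s * ‖x‖ := by
      have hw1 : Tail hp' (m (s + 1)) w = w := by
        apply lp.ext
        funext i
        rw [Stmt16Aux.Tail_apply, hwc i]
        split_ifs <;> first | rfl | (exfalso; omega)
      have hre : R hp' (m s) z
          = ((R hp' (m s)).comp ((X j).comp (Tail hp' (m (s + 1))))) w := by
        rw [ContinuousLinearMap.comp_apply, ContinuousLinearMap.comp_apply, hw1]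
      rw [hre]
      calc ‖((R hp' (m s)).comp ((X j).comp (Tail hp' (m (s + 1))))) w‖
          ≤ ‖(R hp' (m s)).comp ((X j).comp (Tail hp' (m (s + 1))))‖ * ‖w‖ :=
            ContinuousLinearMap.le_opNorm _ w
        _ ≤ (2⁻¹ : ℝ) ^ s * ‖x‖ :=
            mul_le_mul ((mseq_bound hp hp' X s j hjs).2) hwnorm (norm_nonneg w)
              (by positivity)
    have hterm2 : ‖Tail hp' (m (s + 3)) z‖ ≤ (2⁻¹ : ℝ) ^ (s + 2) * ‖x‖ := by
      have hw2 : R hp' (m (s + 2)) w = w := by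
        apply lp.ext
        funext i
        rw [Stmt16Aux.R_apply, hwc i]
        split_ifs <;> first | rfl | (exfalso; omega)
      have hre : Tail hp' (m (s + 3)) z
          = ((Tail hp' (m (s + 3))).comp ((X j).comp (R hp' (m (s + 2))))) w := by
        rw [ContinuousLinearMap.comp_apply, ContinuousLinearMap.comp_apply, hw2]
      rw [hre]
      calc ‖((Tail hp' (m (s + 3))).comp ((X j).comp (R hp' (m (s + 2))))) w‖
          ≤ ‖(Tail hp' (m (s + 3))).comp ((X j).comp (R hp' (m (s + 2))))‖ * ‖w‖ :=
            ContinuousLinearMap.le_opNorm _ w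
        _ ≤ (2⁻¹ : ℝ) ^ (s + 2) * ‖x‖ :=
            mul_le_mul ((mseq_bound hp hp' X (s + 2) j (by omega)).1) hwnorm
              (norm_nonneg w) (by positivity)
    have hcoef : (2⁻¹ : ℝ) ^ s + (2⁻¹ : ℝ) ^ (s + 2) ≤ 4 * (2⁻¹ : ℝ) ^ (s + 1) := by
      have hnn : (0:ℝ) ≤ (2⁻¹ : ℝ) ^ s := by positivity
      rw [pow_succ, pow_succ]
      nlinarith
    calc ‖D (s + 1) x‖ = ‖R hp' (m s) z + Tail hp' (m (s + 3)) z‖ := by rw [hzw, hsplit]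
      _ ≤ ‖R hp' (m s) z‖ + ‖Tail hp' (m (s + 3)) z‖ := norm_add_le _ _
      _ ≤ (2⁻¹ : ℝ) ^ s * ‖x‖ + (2⁻¹ : ℝ) ^ (s + 2) * ‖x‖ := add_le_add hterm1 hterm2
      _ = ((2⁻¹ : ℝ) ^ s + (2⁻¹ : ℝ) ^ (s + 2)) * ‖x‖ := by ring
      _ ≤ 4 * (2⁻¹ : ℝ) ^ (s + 1) * ‖x‖ :=
          mul_le_mul_of_nonneg_right hcoef (norm_nonneg x)
  -- compactness of each term
  have hDc : ∀ k, IsCompactOperator (D k) := by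
    intro k
    have h1 : IsCompactOperator ((X j).comp (P (k + 1))) := by
      have hbase : IsCompactOperator (P (k + 1)) := Pdef_compact hp' m k
      exact hbase.clm_comp (X j)
    have h2 : IsCompactOperator ((Q k).comp ((X j).comp (P (k + 1)))) := by
      exact h1.clm_comp (Q k)
    exact h1.sub h2
  -- summability
  have hsummable : Summable D := by
    refine Summable.of_norm_bounded_eventually_nat (g := fun k => 4 * (2⁻¹ : ℝ) ^ k)
      ((summable_geometric_of_lt_one (by norm_num) (by norm_num)).mul_left 4) ?_
    filter_upwards [eventually_ge_atTop (j + 1)] with k hk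
    exact hDnorm k hk
  set K : E p →L[ℂ] E p := ∑' k, D k with hK
  have hKsum : HasSum D K := hsummable.hasSum
  refine ⟨X j - K, ?_, ?_⟩
  · intro x
    have h1 : HasSum (fun k => P (k + 1) x) x := by
      have hb := hasSum_blocks hp' m hmono h0 x
      refine hb.congr_fun (fun k => ?_)
      rw [hP, Pdef_succ]
    have h2 : HasSum (fun k => (X j) (P (k + 1) x)) ((X j) x) := h1.mapL (X j)
    have h3 : HasSum (fun k => D k x) (K x) :=
      hKsum.mapL (ContinuousLinearMap.apply ℂ (E p) x)
    have h4 := h2.sub h3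
    have h5 : ∀ k, ((P k + P (k + 1) + P (k + 2)) ∘L X j ∘L P (k + 1)) x
        = (X j) (P (k + 1) x) - D k x := by
      intro k
      simp only [hD, hQ, ContinuousLinearMap.sub_apply, ContinuousLinearMap.comp_apply,
        sub_sub_cancel]
    rw [ContinuousLinearMap.sub_apply]
    have h6 : (fun k => ((P k + P (k + 1) + P (k + 2)) ∘L X j ∘L P (k + 1)) x)
        = fun k => (X j) (P (k + 1) x) - D k x := funext h5
    rw [h6]
    exact h4
  · have hsub : X j - (X j - K) = K := sub_sub_cancel _ _
    rw [hsub]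
    have hpart : ∀ N : ℕ,
        IsCompactOperator ((∑ k ∈ Finset.range N, D k : E p →L[ℂ] E p) : E p → E p) := by
      intro N
      induction N with
      | zero => simpa using isCompactOperator_zero
      | succ n ih =>
          rw [Finset.sum_range_succ]
          exact ih.add (hDc n)
    exact isCompactOperator_of_tendsto hKsum.tendsto_sum_nat
      (Filter.Eventually.of_forall hpart)
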